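/- Every function in AP admits a polynomial modulus of continuity: if f :⊆ ℝⁿ → ℝᵐ belongs to AP, then there exists a polynomial ℧ : ℝ₊² → ℝ₊ with nonnegative coefficients such that for all x, y ∈ dom f and all μ ≥ 0, if ‖x − y‖_∞ ≤ e^{−℧(‖x‖_∞, μ)} then ‖f(x) − f(y)‖_∞ ≤ e^{−μ}. -/

import Mathlib

noncomputable section

/-- Evaluation of a vector of multivariate polynomials at a point. -/
def pEval {d e : ℕ} (p : Fin e → MvPolynomial (Fin d) ℝ) (x : Fin d → ℝ) : Fin e → ℝ :=
  fun i => MvPolynomial.eval x (p i)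

/-- Length of the solution curve of the PIVP `y' = p(y)` on `[0, t]`
(the sup norm of the derivative is integrated). -/
def pLen {d : ℕ} (p : Fin d → MvPolynomial (Fin d) ℝ) (y : ℝ → Fin d → ℝ) (t : ℝ) : ℝ :=
  ∫ s in (0:ℝ)..t, ‖pEval p (y s)‖

/-- `Ω : ℝ₊² → ℝ₊` is a polynomial function. -/
def IsPolyFun2 (Ω : ℝ → ℝ → ℝ) : Prop :=
  (∃ P : MvPolynomial (Fin 2) ℝ, ∀ a b : ℝ, Ω a b = MvPolynomial.eval ![a, b] P) ∧
  ∀ a b : ℝ, 0 ≤ a → 0 ≤ b → 0 ≤ Ω a b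

/-- The class `AP` of polynomial-length computable partial functions `f :⊆ ℝⁿ → ℝᵐ`
(`dom` is the domain of `f`). -/
def AP {n m : ℕ} (dom : Set (Fin n → ℝ)) (f : (Fin n → ℝ) → (Fin m → ℝ)) : Prop :=
  ∃ (d : ℕ) (hd : m ≤ d) (p : Fin d → MvPolynomial (Fin d) ℝ)
    (q : Fin d → MvPolynomial (Fin n) ℝ) (Ω : ℝ → ℝ → ℝ),
    IsPolyFun2 Ω ∧
    ∀ x ∈ dom, ∃ y : ℝ → Fin d → ℝ,
      (y 0 = fun i => MvPolynomial.eval x (q i)) ∧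
      (∀ t : ℝ, 0 ≤ t → HasDerivAt y (pEval p (y t)) t) ∧
      (∀ t : ℝ, 0 ≤ t → ∀ μ : ℝ, 0 ≤ μ → Ω ‖x‖ μ ≤ pLen p y t →
        ‖(fun i : Fin m => y t (Fin.castLE hd i)) - f x‖ ≤ Real.exp (-μ)) ∧
      (∀ t : ℝ, 0 ≤ t → t ≤ pLen p y t)

namespace APaux
open MvPolynomial Finset

def Pos {σ : Type*} (W : MvPolynomial σ ℝ) : Prop := ∀ c, 0 ≤ W.coeff c

variable {σ : Type*}

theorem Pos.zero : Pos (0 : MvPolynomial σ ℝ) := fun c => by simp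

theorem Pos.add {W V : MvPolynomial σ ℝ} (hW : Pos W) (hV : Pos V) : Pos (W + V) := by
  intro c; rw [coeff_add]; exact add_nonneg (hW c) (hV c)

theorem Pos.mul {W V : MvPolynomial σ ℝ} (hW : Pos W) (hV : Pos V) : Pos (W * V) := by
  classical
  intro c; rw [coeff_mul]
  exact Finset.sum_nonneg fun p _ => mul_nonneg (hW p.1) (hV p.2)

theorem Pos.C {r : ℝ} (hr : 0 ≤ r) : Pos (MvPolynomial.C r : MvPolynomial σ ℝ) := by
  classical
  intro c; rw [coeff_C]; positivity

theorem Pos.one : Pos (1 : MvPolynomial σ ℝ) := by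
  simpa using Pos.C (σ := σ) zero_le_one

theorem Pos.X (i : σ) : Pos (MvPolynomial.X i : MvPolynomial σ ℝ) := by
  classical
  intro c; rw [coeff_X']; split <;> norm_num

theorem Pos.pow {W : MvPolynomial σ ℝ} (hW : Pos W) (k : ℕ) : Pos (W ^ k) := by
  induction k with
  | zero => simpa using Pos.one
  | succ k ih => rw [pow_succ]; exact ih.mul hW

theorem Pos.sum {ι : Type*} (s : Finset ι) (g : ι → MvPolynomial σ ℝ)
    (h : ∀ i ∈ s, Pos (g i)) : Pos (∑ i ∈ s, g i) := by
  classical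
  induction s using Finset.induction with
  | empty => simpa using Pos.zero
  | insert _ _ hx ih =>
    rw [Finset.sum_insert hx]
    exact (h _ (Finset.mem_insert_self _ _)).add
      (ih fun i hi => h i (Finset.mem_insert_of_mem hi))

theorem Pos.prod {ι : Type*} (s : Finset ι) (g : ι → MvPolynomial σ ℝ)
    (h : ∀ i ∈ s, Pos (g i)) : Pos (∏ i ∈ s, g i) := by
  classical
  induction s using Finset.induction with
  | empty => simpa using Pos.one
  | insert _ _ hx ih =>
    rw [Finset.prod_insert hx]
    exact (h _ (Finset.mem_insert_self _ _)).mul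
      (ih fun i hi => h i (Finset.mem_insert_of_mem hi))

theorem Pos.monomial {r : ℝ} (hr : 0 ≤ r) (c : σ →₀ ℕ) :
    Pos (MvPolynomial.monomial c r : MvPolynomial σ ℝ) := by
  classical
  intro c'; rw [coeff_monomial]; positivity

theorem Pos.eval_nonneg {W : MvPolynomial σ ℝ} (hW : Pos W) {x : σ → ℝ}
    (hx : ∀ i, 0 ≤ x i) : 0 ≤ eval x W := by
  rw [eval_eq]
  refine Finset.sum_nonneg fun c _ => mul_nonneg (hW c) (Finset.prod_nonneg fun i _ => ?_)
  exact pow_nonneg (hx i) _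

theorem Pos.eval_mono {W : MvPolynomial σ ℝ} (hW : Pos W) {x y : σ → ℝ}
    (hx : ∀ i, 0 ≤ x i) (hxy : ∀ i, x i ≤ y i) : eval x W ≤ eval y W := by
  rw [eval_eq, eval_eq]
  refine Finset.sum_le_sum fun c _ => ?_
  refine mul_le_mul_of_nonneg_left (Finset.prod_le_prod (fun i _ => pow_nonneg (hx i) _)
    (fun i _ => pow_le_pow_left₀ (hx i) (hxy i) _)) (hW c)

/-- coefficient-wise absolute value majorant -/
noncomputable def posify (W : MvPolynomial σ ℝ) : MvPolynomial σ ℝ :=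
  ∑ c ∈ W.support, MvPolynomial.monomial c |W.coeff c|

theorem Pos.posify (W : MvPolynomial σ ℝ) : Pos (APaux.posify W) :=
  Pos.sum _ _ fun c _ => Pos.monomial (abs_nonneg _) c

theorem abs_eval_le_eval_posify (W : MvPolynomial σ ℝ) {x : σ → ℝ} (hx : ∀ i, 0 ≤ x i) :
    |eval x W| ≤ eval x (posify W) := by
  conv_lhs => rw [eval_eq (f := W)]
  refine (Finset.abs_sum_le_sum_abs _ _).trans ?_
  rw [posify, map_sum]
  refine Finset.sum_le_sum fun c hc => ?_
  rw [eval_monomial, abs_mul, Finsupp.prod]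
  rw [abs_of_nonneg (Finset.prod_nonneg fun i _ => pow_nonneg (hx i) _)]

theorem Pos.bind₁ {g : σ → MvPolynomial σ ℝ} (hg : ∀ i, Pos (g i))
    {W : MvPolynomial σ ℝ} (hW : Pos W) : Pos (MvPolynomial.bind₁ g W) := by
  classical
  rw [show W = ∑ c ∈ W.support, MvPolynomial.monomial c (W.coeff c) from (support_sum_monomial_coeff W).symm]
  rw [map_sum]
  refine Pos.sum _ _ fun c _ => ?_
  rw [bind₁_monomial]
  exact (Pos.C (hW c)).mul (Pos.prod _ _ fun i _ => (hg i).pow _)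

theorem eval_bind₁' (x : σ → ℝ) (g : σ → MvPolynomial σ ℝ) (W : MvPolynomial σ ℝ) :
    eval x (MvPolynomial.bind₁ g W) = eval (fun i => eval x (g i)) W := by
  rw [show (eval x : MvPolynomial σ ℝ →+* ℝ) (MvPolynomial.bind₁ g W)
      = aeval x (MvPolynomial.bind₁ g W) from rfl, aeval_bind₁]; rfl


theorem exists_bounds {k : ℕ} (P : MvPolynomial (Fin k) ℝ) :
    ∃ A B : MvPolynomial (Fin 2) ℝ, Pos A ∧ Pos B ∧
      ∀ (r : ℝ), 0 ≤ r → ∀ x y : Fin k → ℝ, ‖x‖ ≤ r → ‖y‖ ≤ r →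
        |eval x P| ≤ eval ![r,0] B ∧
        |eval x P - eval y P| ≤ eval ![r,0] A * ‖x - y‖ := by
  induction P using MvPolynomial.induction_on with
  | C a =>
    refine ⟨0, MvPolynomial.C |a|, Pos.zero, Pos.C (abs_nonneg a), fun r hr x y hx hy => ?_⟩
    simp
  | add P Q hP hQ =>
    obtain ⟨A1, B1, hA1, hB1, h1⟩ := hP
    obtain ⟨A2, B2, hA2, hB2, h2⟩ := hQ
    refine ⟨A1 + A2, B1 + B2, hA1.add hA2, hB1.add hB2, fun r hr x y hx hy => ?_⟩
    obtain ⟨hb1, ha1⟩ := h1 r hr x y hx hy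
    obtain ⟨hb2, ha2⟩ := h2 r hr x y hx hy
    constructor
    · rw [map_add, map_add]
      exact (abs_add_le _ _).trans (add_le_add hb1 hb2)
    · rw [map_add, map_add, map_add, add_mul]
      calc |eval x P + eval x Q - (eval y P + eval y Q)|
          = |(eval x P - eval y P) + (eval x Q - eval y Q)| := by ring_nf
        _ ≤ _ := (abs_add_le _ _).trans (add_le_add ha1 ha2)
  | mul_X P i hP =>
    obtain ⟨A, B, hA, hB, h⟩ := hP
    refine ⟨B + A * MvPolynomial.X 0, B * MvPolynomial.X 0, (hB.add (hA.mul (Pos.X 0))),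
      hB.mul (Pos.X 0), fun r hr x y hx hy => ?_⟩
    obtain ⟨hbx, ha⟩ := h r hr x y hx hy
    obtain ⟨hby, -⟩ := h r hr y x hy hx
    have hxi : |x i| ≤ r := by simpa [Real.norm_eq_abs] using (norm_le_pi_norm x i).trans hx
    have hyi : |y i| ≤ r := by simpa [Real.norm_eq_abs] using (norm_le_pi_norm y i).trans hy
    have hBnn : (0:ℝ) ≤ eval ![r,0] B := hB.eval_nonneg (by
      intro j; fin_cases j <;> simp [hr])
    have hAnn : (0:ℝ) ≤ eval ![r,0] A := hA.eval_nonneg (by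
      intro j; fin_cases j <;> simp [hr])
    have hevB : eval ![r,(0:ℝ)] (B * MvPolynomial.X 0) = eval ![r,0] B * r := by simp
    have hevA : eval ![r,(0:ℝ)] (B + A * MvPolynomial.X 0)
        = eval ![r,0] B + eval ![r,0] A * r := by simp
    constructor
    · rw [hevB, map_mul, eval_X, abs_mul]
      exact mul_le_mul hbx hxi (abs_nonneg _) hBnn
    · rw [hevA, map_mul, map_mul, eval_X, eval_X]
      have key : eval x P * x i - eval y P * y i
          = eval x P * (x i - y i) + (eval x P - eval y P) * y i := by ring
      rw [key]
      have hxysub : |x i - y i| ≤ ‖x - y‖ := by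
        have := norm_le_pi_norm (x - y) i
        simpa [Real.norm_eq_abs] using this
      calc |eval x P * (x i - y i) + (eval x P - eval y P) * y i|
          ≤ |eval x P| * |x i - y i| + |eval x P - eval y P| * |y i| := by
            refine (abs_add_le _ _).trans ?_; rw [abs_mul, abs_mul]
        _ ≤ eval ![r,0] B * ‖x - y‖ + (eval ![r,0] A * ‖x - y‖) * r := by
            refine add_le_add (mul_le_mul hbx hxysub (abs_nonneg _) hBnn) ?_
            exact mul_le_mul ha hyi (abs_nonneg _) (by positivity)
        _ = (eval ![r,0] B + eval ![r,0] A * r) * ‖x - y‖ := by ring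

theorem exists_vec_bounds {k e : ℕ} (p : Fin e → MvPolynomial (Fin k) ℝ) :
    ∃ A B : MvPolynomial (Fin 2) ℝ, Pos A ∧ Pos B ∧
      ∀ (r : ℝ), 0 ≤ r → ∀ x y : Fin k → ℝ, ‖x‖ ≤ r → ‖y‖ ≤ r →
        ‖pEval p x‖ ≤ eval ![r,0] B ∧
        ‖pEval p x - pEval p y‖ ≤ eval ![r,0] A * ‖x - y‖ := by
  choose A B hA hB h using fun i => exists_bounds (p i)
  refine ⟨∑ i, A i, ∑ i, B i, Pos.sum _ _ fun i _ => hA i, Pos.sum _ _ fun i _ => hB i,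
    fun r hr x y hx hy => ?_⟩
  have hnn : ∀ j : Fin 2, 0 ≤ (![r, 0] : Fin 2 → ℝ) j := by
    intro j; fin_cases j <;> simp [hr]
  have hSB : (0:ℝ) ≤ eval ![r,0] (∑ i, B i) := (Pos.sum _ _ fun i _ => hB i).eval_nonneg hnn
  have hSA : (0:ℝ) ≤ eval ![r,0] (∑ i, A i) := (Pos.sum _ _ fun i _ => hA i).eval_nonneg hnn
  constructor
  · refine pi_norm_le_iff_of_nonneg hSB |>.2 fun i => ?_
    have := (h i r hr x y hx hy).1
    refine le_trans (by simpa [pEval, Real.norm_eq_abs] using this) ?_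
    rw [map_sum]
    exact Finset.single_le_sum (fun j _ => (hB j).eval_nonneg hnn) (Finset.mem_univ i)
  · refine pi_norm_le_iff_of_nonneg (by positivity) |>.2 fun i => ?_
    have := (h i r hr x y hx hy).2
    refine le_trans (by simpa [pEval, Real.norm_eq_abs] using this) ?_
    refine mul_le_mul_of_nonneg_right ?_ (norm_nonneg _)
    rw [map_sum]
    exact Finset.single_le_sum (fun j _ => (hA j).eval_nonneg hnn) (Finset.mem_univ i)

section Curves
open Set MeasureTheory intervalIntegral

theorem pEval_continuous {k e : ℕ} (p : Fin e → MvPolynomial (Fin k) ℝ) :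
    Continuous (pEval p) := continuous_pi fun i => MvPolynomial.continuous_eval (p i)

variable {d : ℕ} {p : Fin d → MvPolynomial (Fin d) ℝ} {y : ℝ → Fin d → ℝ}
variable (hy : ∀ t : ℝ, 0 ≤ t → HasDerivAt y (pEval p (y t)) t)

include hy

theorem curve_contOn : ContinuousOn y (Ici 0) :=
  fun t ht => ((hy t ht).continuousAt).continuousWithinAt

theorem speed_contOn : ContinuousOn (fun s => ‖pEval p (y s)‖) (Ici 0) :=
  ((pEval_continuous p).comp_continuousOn (curve_contOn hy)).norm

theorem speed_intInt {a b : ℝ} (ha : 0 ≤ a) (hb : 0 ≤ b) :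
    IntervalIntegrable (fun s => ‖pEval p (y s)‖) volume a b := by
  refine ((speed_contOn hy).mono ?_).intervalIntegrable
  intro s hs
  exact le_trans (le_min ha hb) hs.1

theorem vel_intInt {a b : ℝ} (ha : 0 ≤ a) (hb : 0 ≤ b) :
    IntervalIntegrable (fun s => pEval p (y s)) volume a b := by
  refine (((pEval_continuous p).comp_continuousOn (curve_contOn hy)).mono ?_).intervalIntegrable
  intro s hs
  exact le_trans (le_min ha hb) hs.1

theorem pLen_mono {s t : ℝ} (hs : 0 ≤ s) (hst : s ≤ t) : pLen p y s ≤ pLen p y t := by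
  have h1 := speed_intInt hy (le_refl 0) hs
  have h2 := speed_intInt hy hs (hs.trans hst)
  have hadd := integral_add_adjacent_intervals h1 h2
  have hnn : 0 ≤ ∫ u in s..t, ‖pEval p (y u)‖ :=
    integral_nonneg hst (fun u _ => norm_nonneg _)
  unfold pLen
  rw [← hadd]
  linarith

theorem pLen_contOn {T : ℝ} (hT : 0 ≤ T) : ContinuousOn (pLen p y) (Icc 0 T) := by
  have : IntegrableOn (fun s => ‖pEval p (y s)‖) (uIcc 0 T) volume := by
    rw [uIcc_of_le hT]
    exact ((speed_contOn hy).mono (Icc_subset_Ici_self)).integrableOn_Icc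
  have := continuousOn_primitive_interval (a := 0) (b := T) this
  rwa [uIcc_of_le hT] at this

theorem norm_sub_init_le_pLen {t : ℝ} (ht : 0 ≤ t) : ‖y t - y 0‖ ≤ pLen p y t := by
  have hftc : ∫ s in (0:ℝ)..t, pEval p (y s) = y t - y 0 := by
    refine integral_eq_sub_of_hasDerivAt (fun s hs => ?_) (vel_intInt hy le_rfl ht)
    rw [uIcc_of_le ht] at hs
    exact hy s hs.1
  rw [← hftc]
  exact norm_integral_le_integral_norm ht

end Curves
end APaux

/-- **Every function in `AP` admits a polynomial modulus of continuity**: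
there is a two-variable real polynomial `℧` with nonnegative coefficients such that
for all `x, y` in the domain of `f` and all `μ ≥ 0`,
`‖x − y‖_∞ ≤ exp (−℧(‖x‖_∞, μ))` implies `‖f x − f y‖_∞ ≤ exp (−μ)`. -/
theorem ap_poly_modulus_of_continuity {n m : ℕ} (dom : Set (Fin n → ℝ))
    (f : (Fin n → ℝ) → (Fin m → ℝ)) (hf : AP dom f) :
    ∃ ℧ : MvPolynomial (Fin 2) ℝ,
      (∀ c : Fin 2 →₀ ℕ, 0 ≤ MvPolynomial.coeff c ℧) ∧
      ∀ x ∈ dom, ∀ y ∈ dom, ∀ μ : ℝ, 0 ≤ μ →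
        ‖x - y‖ ≤ Real.exp (-(MvPolynomial.eval ![‖x‖, μ] ℧)) →
        ‖f x - f y‖ ≤ Real.exp (-μ) := by
  classical
  obtain ⟨d, hd, p, q, Ω, ⟨⟨P, hP⟩, hΩnn⟩, H⟩ := hf
  obtain ⟨Aq, Bq, hAq, hBq, hq⟩ := APaux.exists_vec_bounds q
  obtain ⟨Ap, Bp, hAp, hBp, hp⟩ := APaux.exists_vec_bounds p
  set X0 : MvPolynomial (Fin 2) ℝ := MvPolynomial.X 0 with hX0
  set X1 : MvPolynomial (Fin 2) ℝ := MvPolynomial.X 1 with hX1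
  set Pp : MvPolynomial (Fin 2) ℝ := APaux.posify P with hPp
  set Lp : MvPolynomial (Fin 2) ℝ :=
    MvPolynomial.bind₁ ![X0 + MvPolynomial.C 1, X1 + MvPolynomial.C 2] Pp + 1 with hLp
  set Rp : MvPolynomial (Fin 2) ℝ :=
    MvPolynomial.bind₁ ![X0 + MvPolynomial.C 1, 0] Bq + Lp + 1 with hRp
  set Kp : MvPolynomial (Fin 2) ℝ := MvPolynomial.bind₁ ![Rp, 0] Ap with hKp
  set AqS : MvPolynomial (Fin 2) ℝ :=
    MvPolynomial.bind₁ ![X0 + MvPolynomial.C 1, 0] Aq with hAqS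
  set U : MvPolynomial (Fin 2) ℝ :=
    (X1 + MvPolynomial.C 2) + MvPolynomial.C 2 * Kp * Lp + AqS + MvPolynomial.C 1 with hUdef
  have posvec : ∀ (W V : MvPolynomial (Fin 2) ℝ), APaux.Pos W → APaux.Pos V →
      ∀ i, APaux.Pos ((![W, V] : Fin 2 → MvPolynomial (Fin 2) ℝ) i) := by
    intro W V hW hV i; fin_cases i <;> assumption
  have hPpPos : APaux.Pos Pp := APaux.Pos.posify P
  have hx01 : APaux.Pos (X0 + MvPolynomial.C 1) := (APaux.Pos.X 0).add (APaux.Pos.C zero_le_one)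
  have hx12 : APaux.Pos (X1 + MvPolynomial.C 2) :=
    (APaux.Pos.X 1).add (APaux.Pos.C (by norm_num))
  have hLpPos : APaux.Pos Lp := (APaux.Pos.bind₁ (posvec _ _ hx01 hx12) hPpPos).add APaux.Pos.one
  have hRpPos : APaux.Pos Rp :=
    ((APaux.Pos.bind₁ (posvec _ _ hx01 APaux.Pos.zero) hBq).add hLpPos).add APaux.Pos.one
  have hKpPos : APaux.Pos Kp := APaux.Pos.bind₁ (posvec _ _ hRpPos APaux.Pos.zero) hAp
  have hAqSPos : APaux.Pos AqS := APaux.Pos.bind₁ (posvec _ _ hx01 APaux.Pos.zero) hAq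
  have hUPos : APaux.Pos U :=
    ((hx12.add (((APaux.Pos.C (by norm_num)).mul hKpPos).mul hLpPos)).add hAqSPos).add
      (APaux.Pos.C zero_le_one)
  refine ⟨U, hUPos, ?_⟩
  intro x hx z hz μ hμ hxz
  set a : ℝ := ‖x‖ with ha
  have ha0 : (0:ℝ) ≤ a := norm_nonneg x
  have hnn2 : ∀ (c e : ℝ), 0 ≤ c → 0 ≤ e → ∀ i, 0 ≤ (![c, e] : Fin 2 → ℝ) i := by
    intro c e hc he i; fin_cases i <;> assumption
  have hmono2 : ∀ (W : MvPolynomial (Fin 2) ℝ), APaux.Pos W → ∀ c e c' e' : ℝ,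
      0 ≤ c → 0 ≤ e → c ≤ c' → e ≤ e' →
      MvPolynomial.eval ![c, e] W ≤ MvPolynomial.eval ![c', e'] W := by
    intro W hW c e c' e' hc he hcc hee
    refine hW.eval_mono (hnn2 c e hc he) ?_
    intro i; fin_cases i <;> assumption
  have evalvec : ∀ (c e : ℝ) (W V : MvPolynomial (Fin 2) ℝ),
      (fun i => MvPolynomial.eval ![c, e] ((![W, V] : Fin 2 → MvPolynomial (Fin 2) ℝ) i))
        = ![MvPolynomial.eval ![c, e] W, MvPolynomial.eval ![c, e] V] := by
    intro c e W V; funext i; fin_cases i <;> simp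
  set L : ℝ := MvPolynomial.eval ![a + 1, μ + 2] Pp + 1 with hL
  set Rqv : ℝ := MvPolynomial.eval ![a + 1, (0:ℝ)] Bq with hRqv
  set Aqv : ℝ := MvPolynomial.eval ![a + 1, (0:ℝ)] Aq with hAqv
  set Rv : ℝ := Rqv + L + 1 with hRvdef
  set Kv : ℝ := MvPolynomial.eval ![Rv, (0:ℝ)] Ap with hKvdef
  have hμ2 : (0:ℝ) ≤ μ + 2 := by linarith
  have hPp0 : 0 ≤ MvPolynomial.eval ![a + 1, μ + 2] Pp :=
    hPpPos.eval_nonneg (hnn2 _ _ (by linarith) hμ2)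
  have hL1 : (1:ℝ) ≤ L := by rw [hL]; linarith
  have hL0 : (0:ℝ) ≤ L := by linarith
  have hRqv0 : 0 ≤ Rqv := hBq.eval_nonneg (hnn2 _ _ (by linarith) le_rfl)
  have hAqv0 : 0 ≤ Aqv := hAq.eval_nonneg (hnn2 _ _ (by linarith) le_rfl)
  have hRv0 : 0 ≤ Rv := by rw [hRvdef]; linarith
  have hKv0 : 0 ≤ Kv := hAp.eval_nonneg (hnn2 _ _ hRv0 le_rfl)
  -- evaluation of the polynomials
  have hLeval : MvPolynomial.eval ![a, μ] Lp = L := by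
    rw [hLp, map_add, APaux.eval_bind₁', evalvec]
    simp [hL, hX0, hX1]
  have hRqeval : MvPolynomial.eval ![a, μ]
      (MvPolynomial.bind₁ ![X0 + MvPolynomial.C 1, (0 : MvPolynomial (Fin 2) ℝ)] Bq) = Rqv := by
    rw [APaux.eval_bind₁', evalvec]
    simp [hRqv, hX0, hX1]
  have hRpeval : MvPolynomial.eval ![a, μ] Rp = Rv := by
    rw [hRp, map_add, map_add, hRqeval, hLeval]
    simp [hRvdef]
  have hKpeval : MvPolynomial.eval ![a, μ] Kp = Kv := by
    rw [hKp, APaux.eval_bind₁', evalvec, hRpeval]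
    simp [hKvdef]
  have hAqSeval : MvPolynomial.eval ![a, μ] AqS = Aqv := by
    rw [hAqS, APaux.eval_bind₁', evalvec]
    simp [hAqv, hX0, hX1]
  have hUeval : MvPolynomial.eval ![a, μ] U = (μ + 2) + 2 * Kv * L + Aqv + 1 := by
    rw [hUdef, map_add, map_add, map_add, map_mul, map_mul, hKpeval, hLeval, hAqSeval]
    simp [hX1]
  have hUev0 : 0 ≤ MvPolynomial.eval ![a, μ] U := hUPos.eval_nonneg (hnn2 _ _ ha0 hμ)
  set δ : ℝ := Real.exp (-(MvPolynomial.eval ![a, μ] U)) with hδdef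
  have hδ0 : 0 < δ := Real.exp_pos _
  have hδ1 : δ ≤ 1 := by
    rw [hδdef, ← Real.exp_zero]
    exact Real.exp_le_exp.2 (by linarith)
  have hznorm : ‖z‖ ≤ a + 1 := by
    have hzx : z = x - (x - z) := by abel
    calc ‖z‖ = ‖x - (x - z)‖ := by rw [← hzx]
      _ ≤ ‖x‖ + ‖x - z‖ := norm_sub_le _ _
      _ ≤ a + 1 := by
          have := hxz.trans hδ1
          rw [← ha]; linarith
  -- Ω is dominated by Pp
  have hΩle : ∀ u v : ℝ, 0 ≤ u → 0 ≤ v → Ω u v ≤ MvPolynomial.eval ![u, v] Pp := by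
    intro u v hu hv
    rw [hP u v]
    exact (le_abs_self _).trans (APaux.abs_eval_le_eval_posify P (hnn2 u v hu hv))
  -- the two solution curves
  obtain ⟨Y, hY0, hY', hYapx, hYlen⟩ := H x hx
  obtain ⟨Z, hZ0, hZ', hZapx, hZlen⟩ := H z hz
  -- choose T with pLen p Y T = L
  have hpY00 : pLen p Y 0 = 0 := intervalIntegral.integral_same
  have hmemL : L ∈ Set.Icc (pLen p Y 0) (pLen p Y L) := by
    rw [hpY00]; exact ⟨hL0, hYlen L hL0⟩
  obtain ⟨T, hTmem, hTlen⟩ :=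
    intermediate_value_Icc hL0 (APaux.pLen_contOn hY' hL0) hmemL
  obtain ⟨hT0, hTL⟩ := hTmem
  -- initial bounds
  have hY0q : Y 0 = pEval q x := hY0
  have hZ0q : Z 0 = pEval q z := hZ0
  have hY0norm : ‖Y 0‖ ≤ Rqv := by
    rw [hY0q]
    exact (hq (a + 1) (by linarith) x x (by rw [← ha]; linarith) (by rw [← ha]; linarith)).1
  have hYball : ∀ s ∈ Set.Icc (0:ℝ) T, ‖Y s‖ ≤ Rqv + L := by
    intro s hs
    have h1 : ‖Y s - Y 0‖ ≤ pLen p Y s := APaux.norm_sub_init_le_pLen hY' hs.1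
    have h2 : pLen p Y s ≤ pLen p Y T := APaux.pLen_mono hY' hs.1 hs.2
    rw [hTlen] at h2
    calc ‖Y s‖ = ‖Y 0 + (Y s - Y 0)‖ := by congr 1; abel
      _ ≤ ‖Y 0‖ + ‖Y s - Y 0‖ := norm_add_le _ _
      _ ≤ Rqv + L := by linarith
  set S : Set (Fin d → ℝ) := Metric.closedBall 0 Rv with hSdef
  have hlip : LipschitzOnWith (Real.toNNReal Kv) (pEval p) S := by
    refine LipschitzOnWith.of_dist_le_mul ?_
    intro u hu v hv
    rw [hSdef, Metric.mem_closedBall, dist_zero_right] at hu hv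
    rw [dist_eq_norm, dist_eq_norm, Real.coe_toNNReal _ hKv0]
    exact (hp Rv hRv0 u v hu hv).2
  have hinit : dist (Y 0) (Z 0) ≤ Aqv * δ := by
    rw [dist_eq_norm, hY0q, hZ0q]
    refine ((hq (a + 1) (by linarith) x z (by rw [← ha]; linarith) hznorm).2).trans ?_
    exact mul_le_mul_of_nonneg_left hxz hAqv0
  -- Gronwall estimate under a ball assumption
  have hGron : ∀ T' : ℝ, T' ∈ Set.Icc 0 T → (∀ s ∈ Set.Icc 0 T', dist (Y s) (Z s) ≤ 1) →
      ∀ s ∈ Set.Icc 0 T', dist (Y s) (Z s) ≤ Aqv * δ * Real.exp (Kv * s) := by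
    intro T' hT' hsmall s hs
    have hYc : ContinuousOn Y (Set.Icc 0 T') :=
      (APaux.curve_contOn hY').mono (fun u hu => hu.1)
    have hZc : ContinuousOn Z (Set.Icc 0 T') :=
      (APaux.curve_contOn hZ').mono (fun u hu => hu.1)
    have hYmemS : ∀ t ∈ Set.Ico (0:ℝ) T', Y t ∈ S := by
      intro t ht
      rw [hSdef, Metric.mem_closedBall, dist_zero_right]
      have := hYball t ⟨ht.1, ht.2.le.trans hT'.2⟩
      rw [hRvdef]; linarith
    have hZmemS : ∀ t ∈ Set.Ico (0:ℝ) T', Z t ∈ S := by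
      intro t ht
      rw [hSdef, Metric.mem_closedBall, dist_zero_right]
      have h1 := hYball t ⟨ht.1, ht.2.le.trans hT'.2⟩
      have h2 := hsmall t ⟨ht.1, ht.2.le⟩
      rw [dist_eq_norm] at h2
      calc ‖Z t‖ = ‖Y t - (Y t - Z t)‖ := by congr 1; abel
        _ ≤ ‖Y t‖ + ‖Y t - Z t‖ := norm_sub_le _ _
        _ ≤ Rv := by rw [hRvdef]; linarith
    have key := dist_le_of_trajectories_ODE_of_mem (v := fun _ w => pEval p w)
      (s := fun _ => S) (K := Real.toNNReal Kv) (fun _ _ => hlip)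
      hYc (fun t ht => (hY' t ht.1).hasDerivWithinAt) hYmemS
      hZc (fun t ht => (hZ' t ht.1).hasDerivWithinAt) hZmemS
      hinit s hs
    rwa [sub_zero, Real.coe_toNNReal _ hKv0] at key
  have hgc : ContinuousOn (fun s => dist (Y s) (Z s)) (Set.Icc (0:ℝ) T) :=
    continuous_dist.comp_continuousOn
      (((APaux.curve_contOn hY').mono (fun u (hu : u ∈ Set.Icc (0:ℝ) T) => hu.1)).prodMk
        ((APaux.curve_contOn hZ').mono (fun u (hu : u ∈ Set.Icc (0:ℝ) T) => hu.1)))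
  set ε : ℝ := Real.exp (-(μ + 2) - Kv * L - 1) with hεdef
  have hε0 : 0 < ε := Real.exp_pos _
  have hKvL0 : 0 ≤ Kv * L := mul_nonneg hKv0 hL0
  have hε1 : ε < 1 := by
    rw [hεdef]
    exact Real.exp_lt_one_iff.2 (by linarith)
  have hgrow : ∀ s : ℝ, 0 ≤ s → s ≤ T → Aqv * δ * Real.exp (Kv * s) ≤ ε := by
    intro s hs0 hsT
    have h1 : Aqv * δ ≤ Real.exp Aqv * Real.exp (-(MvPolynomial.eval ![a, μ] U)) := by
      rw [← hδdef]
      refine mul_le_mul ?_ le_rfl hδ0.le (Real.exp_nonneg _)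
      have := Real.add_one_le_exp Aqv
      linarith
    have h2 : Real.exp (Kv * s) ≤ Real.exp (Kv * L) :=
      Real.exp_le_exp.2 (mul_le_mul_of_nonneg_left (hsT.trans hTL) hKv0)
    calc Aqv * δ * Real.exp (Kv * s)
        ≤ Real.exp Aqv * Real.exp (-(MvPolynomial.eval ![a, μ] U)) * Real.exp (Kv * L) := by
          refine mul_le_mul h1 h2 (Real.exp_nonneg _) ?_
          positivity
      _ = Real.exp (Aqv + -(MvPolynomial.eval ![a, μ] U) + Kv * L) := by
          rw [← Real.exp_add, ← Real.exp_add]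
      _ ≤ ε := by
          rw [hεdef]
          refine Real.exp_le_exp.2 ?_
          rw [hUeval]; linarith
  -- bootstrap: the two curves stay within distance 1
  have hball1 : ∀ s ∈ Set.Icc (0:ℝ) T, dist (Y s) (Z s) ≤ 1 := by
    by_contra hcon
    push_neg at hcon
    obtain ⟨s₀, hs₀, hs₀d⟩ := hcon
    set B : Set ℝ := {u | u ∈ Set.Icc (0:ℝ) T ∧ 1 < dist (Y u) (Z u)} with hBdef
    have hBne : B.Nonempty := ⟨s₀, hs₀, hs₀d⟩
    have hBbdd : BddBelow B := ⟨0, fun u hu => hu.1.1⟩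
    set T' : ℝ := sInf B with hT'def
    have hT'B : T' ∈ closure B := csInf_mem_closure hBne hBbdd
    have hBsub : B ⊆ Set.Icc (0:ℝ) T := fun u hu => hu.1
    have hT'mem : T' ∈ Set.Icc (0:ℝ) T :=
      (IsClosed.closure_subset_iff isClosed_Icc).2 hBsub hT'B
    have hlt1 : ∀ u ∈ Set.Ico (0:ℝ) T', dist (Y u) (Z u) ≤ 1 := by
      intro u hu
      by_contra hgu
      push_neg at hgu
      have huB : u ∈ B := ⟨⟨hu.1, hu.2.le.trans hT'mem.2⟩, hgu⟩
      exact absurd (csInf_le hBbdd huB) (not_le.2 hu.2)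
    have hg0 : dist (Y 0) (Z 0) ≤ 1 := by
      have h := hgrow 0 le_rfl hT0
      rw [mul_zero, Real.exp_zero, mul_one] at h
      exact hinit.trans (h.trans hε1.le)
    have hgT'le1 : dist (Y T') (Z T') ≤ 1 := by
      rcases eq_or_lt_of_le hT'mem.1 with h0 | h0
      · rw [← h0]; exact hg0
      · have hclo : T' ∈ closure (Set.Ico 0 T') := by
          rw [closure_Ico (ne_of_lt h0)]
          exact ⟨h0.le, le_rfl⟩
        haveI hne := mem_closure_iff_nhdsWithin_neBot.1 hclo
        have htd : Filter.Tendsto (fun s => dist (Y s) (Z s)) (nhdsWithin T' (Set.Ico 0 T')) (nhds (dist (Y T') (Z T'))) :=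
          (hgc T' hT'mem).mono (fun u hu => ⟨hu.1, hu.2.le.trans hT'mem.2⟩)
        exact le_of_tendsto htd (Filter.eventually_of_mem self_mem_nhdsWithin hlt1)
    have hsmall : ∀ u ∈ Set.Icc (0:ℝ) T', dist (Y u) (Z u) ≤ 1 := by
      intro u hu
      rcases eq_or_lt_of_le hu.2 with h | h
      · rw [h]; exact hgT'le1
      · exact hlt1 u ⟨hu.1, h⟩
    have hgT' : dist (Y T') (Z T') ≤ ε :=
      (hGron T' hT'mem hsmall T' ⟨hT'mem.1, le_rfl⟩).trans (hgrow T' hT'mem.1 hT'mem.2)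
    have hge1 : 1 ≤ dist (Y T') (Z T') := by
      haveI hneB : Filter.NeBot (nhdsWithin T' B) :=
        mem_closure_iff_nhdsWithin_neBot.1 hT'B
      have htd : Filter.Tendsto (fun s => dist (Y s) (Z s)) (nhdsWithin T' B) (nhds (dist (Y T') (Z T'))) :=
        (hgc T' hT'mem).mono hBsub
      exact ge_of_tendsto htd (Filter.eventually_of_mem self_mem_nhdsWithin
        (fun u hu => hu.2.le))
    linarith
  have hdist : ∀ s ∈ Set.Icc (0:ℝ) T, dist (Y s) (Z s) ≤ ε := by
    intro s hs
    exact (hGron T ⟨hT0, le_rfl⟩ hball1 s hs).trans (hgrow s hs.1 hs.2)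
  have hZball : ∀ s ∈ Set.Icc (0:ℝ) T, ‖Z s‖ ≤ Rv := by
    intro s hs
    have h1 := hYball s hs
    have h2 := (hball1 s hs)
    rw [dist_eq_norm] at h2
    calc ‖Z s‖ = ‖Y s - (Y s - Z s)‖ := by congr 1; abel
      _ ≤ ‖Y s‖ + ‖Y s - Z s‖ := norm_sub_le _ _
      _ ≤ Rv := by rw [hRvdef]; linarith
  -- length of the second curve is also large at time T
  have hZlenT : L - 1 ≤ pLen p Z T := by
    have hint1 := APaux.speed_intInt hY' le_rfl hT0
    have hint2 := APaux.speed_intInt hZ' le_rfl hT0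
    have hptwise : ∀ u ∈ Set.Icc (0:ℝ) T,
        ‖pEval p (Y u)‖ - ‖pEval p (Z u)‖ ≤ Kv * ε := by
      intro u hu
      have hYin : ‖Y u‖ ≤ Rv := (hYball u hu).trans (by rw [hRvdef]; linarith)
      have hZin : ‖Z u‖ ≤ Rv := hZball u hu
      have h1 : ‖pEval p (Y u) - pEval p (Z u)‖ ≤ Kv * ‖Y u - Z u‖ :=
        (hp Rv hRv0 (Y u) (Z u) hYin hZin).2
      have h2 : ‖Y u - Z u‖ ≤ ε := by
        rw [← dist_eq_norm]; exact hdist u hu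
      calc ‖pEval p (Y u)‖ - ‖pEval p (Z u)‖ ≤ ‖pEval p (Y u) - pEval p (Z u)‖ :=
            norm_sub_norm_le _ _
        _ ≤ Kv * ‖Y u - Z u‖ := h1
        _ ≤ Kv * ε := mul_le_mul_of_nonneg_left h2 hKv0
    have hdiff : pLen p Y T - pLen p Z T ≤ T * (Kv * ε) := by
      have hsub : pLen p Y T - pLen p Z T
          = ∫ u in (0:ℝ)..T, (‖pEval p (Y u)‖ - ‖pEval p (Z u)‖) := by
        rw [intervalIntegral.integral_sub hint1 hint2]; rfl
      rw [hsub]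
      have hmono := intervalIntegral.integral_mono_on hT0 (hint1.sub hint2)
        intervalIntegrable_const hptwise
      calc (∫ u in (0:ℝ)..T, (‖pEval p (Y u)‖ - ‖pEval p (Z u)‖))
          ≤ ∫ _u in (0:ℝ)..T, Kv * ε := hmono
        _ = (T - 0) * (Kv * ε) := by
            rw [intervalIntegral.integral_const, smul_eq_mul]
        _ = T * (Kv * ε) := by ring
    have hKLe : T * (Kv * ε) ≤ 1 := by
      have hTKe : T * (Kv * ε) ≤ L * (Kv * ε) :=
        mul_le_mul_of_nonneg_right hTL (mul_nonneg hKv0 hε0.le)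
      have hεle : ε ≤ Real.exp (-(Kv * L)) * Real.exp (-1) := by
        rw [hεdef, ← Real.exp_add]
        exact Real.exp_le_exp.2 (by linarith)
      have hwle : Kv * L ≤ Real.exp (Kv * L) := by
        have := Real.add_one_le_exp (Kv * L); linarith
      have hw1 : Kv * L * Real.exp (-(Kv * L)) ≤ 1 := by
        calc Kv * L * Real.exp (-(Kv * L))
            ≤ Real.exp (Kv * L) * Real.exp (-(Kv * L)) :=
              mul_le_mul_of_nonneg_right hwle (Real.exp_nonneg _)
          _ = 1 := by rw [← Real.exp_add]; simp
      have he1 : Real.exp (-1 : ℝ) ≤ 1 := by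
        rw [← Real.exp_zero]; exact Real.exp_le_exp.2 (by norm_num)
      calc T * (Kv * ε) ≤ L * (Kv * ε) := hTKe
        _ = Kv * L * ε := by ring
        _ ≤ Kv * L * (Real.exp (-(Kv * L)) * Real.exp (-1)) :=
            mul_le_mul_of_nonneg_left hεle hKvL0
        _ = (Kv * L * Real.exp (-(Kv * L))) * Real.exp (-1) := by ring
        _ ≤ 1 * Real.exp (-1) := mul_le_mul_of_nonneg_right hw1 (Real.exp_nonneg _)
        _ ≤ 1 := by rw [one_mul]; exact he1
    rw [← hTlen]
    linarith
  -- approximation of f x and f z at time T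
  have happrox1 : ‖(fun i : Fin m => Y T (Fin.castLE hd i)) - f x‖ ≤ Real.exp (-(μ + 2)) := by
    refine hYapx T hT0 (μ + 2) hμ2 ?_
    rw [hTlen]
    calc Ω a (μ + 2) ≤ MvPolynomial.eval ![a, μ + 2] Pp := hΩle a (μ + 2) ha0 hμ2
      _ ≤ MvPolynomial.eval ![a + 1, μ + 2] Pp :=
          hmono2 Pp hPpPos a (μ + 2) (a + 1) (μ + 2) ha0 hμ2 (by linarith) le_rfl
      _ ≤ L := by rw [hL]; linarith
  have happrox2 : ‖(fun i : Fin m => Z T (Fin.castLE hd i)) - f z‖ ≤ Real.exp (-(μ + 2)) := by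
    refine hZapx T hT0 (μ + 2) hμ2 ?_
    calc Ω ‖z‖ (μ + 2) ≤ MvPolynomial.eval ![‖z‖, μ + 2] Pp :=
          hΩle ‖z‖ (μ + 2) (norm_nonneg z) hμ2
      _ ≤ MvPolynomial.eval ![a + 1, μ + 2] Pp :=
          hmono2 Pp hPpPos ‖z‖ (μ + 2) (a + 1) (μ + 2) (norm_nonneg z) hμ2 hznorm le_rfl
      _ = L - 1 := by rw [hL]; ring
      _ ≤ pLen p Z T := hZlenT
  have hεμ : ε ≤ Real.exp (-(μ + 2)) := by
    rw [hεdef]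
    exact Real.exp_le_exp.2 (by linarith)
  have hproj : ‖(fun i : Fin m => Y T (Fin.castLE hd i))
      - (fun i : Fin m => Z T (Fin.castLE hd i))‖ ≤ Real.exp (-(μ + 2)) := by
    refine (pi_norm_le_iff_of_nonneg (Real.exp_nonneg _)).2 fun i => ?_
    have hcomp : ((fun i : Fin m => Y T (Fin.castLE hd i))
        - (fun i : Fin m => Z T (Fin.castLE hd i))) i
        = (Y T - Z T) (Fin.castLE hd i) := rfl
    rw [hcomp]
    calc ‖(Y T - Z T) (Fin.castLE hd i)‖ ≤ ‖Y T - Z T‖ := norm_le_pi_norm _ _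
      _ ≤ ε := by rw [← dist_eq_norm]; exact hdist T ⟨hT0, le_rfl⟩
      _ ≤ Real.exp (-(μ + 2)) := hεμ
  -- triangle inequality
  have hsplit : f x - f z
      = -((fun i : Fin m => Y T (Fin.castLE hd i)) - f x)
        + ((fun i : Fin m => Y T (Fin.castLE hd i))
            - (fun i : Fin m => Z T (Fin.castLE hd i)))
        + ((fun i : Fin m => Z T (Fin.castLE hd i)) - f z) := by
    abel
  have h3exp : 3 * Real.exp (-(μ + 2)) ≤ Real.exp (-μ) := by
    have h32 : (3:ℝ) ≤ Real.exp 2 := by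
      have := Real.add_one_le_exp (2:ℝ); linarith
    have hsplitexp : Real.exp (-μ) = Real.exp (-(μ + 2)) * Real.exp 2 := by
      rw [← Real.exp_add]; ring_nf
    rw [hsplitexp]
    have := mul_le_mul_of_nonneg_left h32 (Real.exp_nonneg (-(μ + 2)))
    linarith
  calc ‖f x - f z‖
      = ‖-((fun i : Fin m => Y T (Fin.castLE hd i)) - f x)
        + ((fun i : Fin m => Y T (Fin.castLE hd i))
            - (fun i : Fin m => Z T (Fin.castLE hd i)))
        + ((fun i : Fin m => Z T (Fin.castLE hd i)) - f z)‖ := by rw [← hsplit]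
    _ ≤ ‖-((fun i : Fin m => Y T (Fin.castLE hd i)) - f x)‖
        + ‖(fun i : Fin m => Y T (Fin.castLE hd i))
            - (fun i : Fin m => Z T (Fin.castLE hd i))‖
        + ‖(fun i : Fin m => Z T (Fin.castLE hd i)) - f z‖ := norm_add₃_le
    _ ≤ Real.exp (-(μ + 2)) + Real.exp (-(μ + 2)) + Real.exp (-(μ + 2)) := by
        rw [norm_neg]
        exact add_le_add (add_le_add happrox1 hproj) happrox2
    _ = 3 * Real.exp (-(μ + 2)) := by ring
    _ ≤ Real.exp (-μ) := h3exp
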